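/- Let σ : A → A⁺ be a substitution that is tame and l-primitive, and let x₀ ∈ X_σ with σᵖ(x₀) = x₀ (p ≥ 1) be a periodic point of the induced map σ : X_σ → X_σ as constructed in the existence lemma. Then for every letter a ∈ A_l, the occurrences of a in the bi-infinite sequence x₀ have bounded gaps: there is d ≥ 1 such that every block of d consecutive coordinates of x₀ contains an occurrence of a. -/

import Mathlib

namespace SubstMin

variable {A : Type*}

/-- Apply a map `σ : A → A⁺` to a word by concatenation. -/
def substW (σ : A → List A) (w : List A) : List A := w.flatMap σ

/-- `n`-th iterate of the substitution applied to a word. -/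
def substIter (σ : A → List A) (n : ℕ) (w : List A) : List A := (substW σ)^[n] w

/-- The set `A_l` of letters `a` with `|σⁿ(a)| → ∞`. -/
def longLetters (σ : A → List A) : Set A :=
  {a | Filter.Tendsto (fun n => (substIter σ n [a]).length) Filter.atTop Filter.atTop}

/-- The set `A_s = A \ A_l`. -/
def shortLetters (σ : A → List A) : Set A := (longLetters σ)ᶜ

/-- `σ` is a substitution: letters map to nonempty words and `A_l ≠ ∅`. -/
def IsSubstitution (σ : A → List A) : Prop :=
  (∀ a, σ a ≠ []) ∧ (longLetters σ).Nonempty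

/-- The language `L(σ)`: factors of some `σⁿ(a)`, `n ≥ 1`. -/
def lang (σ : A → List A) : Set (List A) :=
  {w | ∃ (a : A) (n : ℕ), 1 ≤ n ∧ w <:+: substIter σ n [a]}

/-- The finite factor `x[s,t]` of a bi-infinite sequence. -/
def factorOf (x : ℤ → A) (s t : ℤ) : List A :=
  (List.range (t - s + 1).toNat).map fun i => x (s + (i : ℤ))

/-- The substitution dynamical system `X_σ`. -/
def XSub (σ : A → List A) : Set (ℤ → A) :=
  {x | ∀ s t : ℤ, s ≤ t → factorOf x s t ∈ lang σ}

/-- The left shift `T`. -/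
def shiftT (x : ℤ → A) : ℤ → A := fun i => x (i + 1)

/-- A subshift is minimal if it is nonempty and has no nonempty proper closed
shift-invariant subset. -/
def IsMinimalSubshift [TopologicalSpace A] (X : Set (ℤ → A)) : Prop :=
  X.Nonempty ∧ ∀ Y : Set (ℤ → A), Y ⊆ X → Y.Nonempty → IsClosed Y →
    shiftT '' Y = Y → Y = X

/-- `a ∈ A_l` is left isolated: `σⁿ(a) = u a w` with `u ∈ A_s⁺`, `w ∈ A*`. -/
def LeftIsolated (σ : A → List A) (a : A) : Prop :=
  ∃ n : ℕ, 1 ≤ n ∧ ∃ u w : List A, u ≠ [] ∧ (∀ b ∈ u, b ∈ shortLetters σ) ∧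
    substIter σ n [a] = u ++ a :: w

/-- `a ∈ A_l` is right isolated: `σᵐ(a) = w a u` with `u ∈ A_s⁺`, `w ∈ A*`. -/
def RightIsolated (σ : A → List A) (a : A) : Prop :=
  ∃ n : ℕ, 1 ≤ n ∧ ∃ u w : List A, u ≠ [] ∧ (∀ b ∈ u, b ∈ shortLetters σ) ∧
    substIter σ n [a] = w ++ a :: u

/-- `σ` is tame: no letter of `A_l` is left or right isolated. -/
def Tame (σ : A → List A) : Prop :=
  ∀ a ∈ longLetters σ, ¬ LeftIsolated σ a ∧ ¬ RightIsolated σ a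

/-- `σ` is `l`-primitive. -/
def LPrimitive (σ : A → List A) : Prop :=
  ∃ n : ℕ, 1 ≤ n ∧ ∀ a ∈ longLetters σ, ∀ b ∈ longLetters σ, a ∈ substIter σ n [b]

/-- `a → b` : `b` occurs in `σⁿ(a)` for some `n ≥ 1`. -/
def arrow (σ : A → List A) (a b : A) : Prop :=
  ∃ n : ℕ, 1 ≤ n ∧ b ∈ substIter σ n [a]

/-- `A_{∘,l} = {a ∈ A_l | a → a}`. -/
def circLong (σ : A → List A) : Set A := {a | a ∈ longLetters σ ∧ arrow σ a a}

/-- `A_{min,l}`: letters of `A_l` minimal in `A_l`. -/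
def minLong (σ : A → List A) : Set A :=
  {a | a ∈ longLetters σ ∧ ∀ b ∈ longLetters σ, arrow σ a b → arrow σ b a}

/-- `x` is a periodic point of the shift. -/
def IsPeriodicPoint (x : ℤ → A) : Prop := ∃ p : ℕ, 1 ≤ p ∧ shiftT^[p] x = x

/-- `X` is a single periodic orbit. -/
def IsSinglePeriodicOrbit (X : Set (ℤ → A)) : Prop :=
  ∃ x : ℤ → A, IsPeriodicPoint x ∧ X = Set.range fun i : ℤ => fun j => x (j + i)

/-- `y = σ(x)` : `y` is obtained from `x` by applying `σ` to each coordinate and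
concatenating, with `σ(x(0))` placed starting at coordinate `0`. -/
def IsSubstImage (σ : A → List A) (x y : ℤ → A) : Prop :=
  ∃ o : ℤ → ℤ, o 0 = 0 ∧ (∀ i : ℤ, o (i + 1) = o i + (σ (x i)).length) ∧
    ∀ i : ℤ, factorOf y (o i) (o (i + 1) - 1) = σ (x i)

/-- The map `s` on nonempty subsets of `A_l`: `s(F) = ⋃_{a ∈ F} (Lett(σ(a)) ∩ A_l)`. -/
def sMap (σ : A → List A) (F : Set A) : Set A :=
  {b | b ∈ longLetters σ ∧ ∃ a ∈ F, b ∈ σ a}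

end SubstMin

namespace S12
open SubstMin Filter List

variable {A : Type*} {σ : A → List A}

def Short (σ : A → List A) (w : List A) : Prop := ∀ e ∈ w, e ∈ shortLetters σ

lemma substW_append (σ : A → List A) (u v : List A) :
    substW σ (u ++ v) = substW σ u ++ substW σ v := List.flatMap_append

lemma substIter_zero (σ : A → List A) (w : List A) : substIter σ 0 w = w := rfl

lemma substIter_succ (σ : A → List A) (n : ℕ) (w : List A) :
    substIter σ (n+1) w = substIter σ n (substW σ w) := Function.iterate_succ_apply _ _ _

lemma substIter_succ' (σ : A → List A) (n : ℕ) (w : List A) :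
    substIter σ (n+1) w = substW σ (substIter σ n w) := Function.iterate_succ_apply' _ _ _

lemma substIter_add (σ : A → List A) (m n : ℕ) (w : List A) :
    substIter σ (m + n) w = substIter σ m (substIter σ n w) := Function.iterate_add_apply _ _ _ _

lemma substIter_nil (σ : A → List A) (n : ℕ) : substIter σ n [] = [] := by
  induction n with
  | zero => rfl
  | succ n ih => rw [substIter_succ' σ n, ih]; rfl

lemma substIter_append (σ : A → List A) (n : ℕ) (u v : List A) :
    substIter σ n (u ++ v) = substIter σ n u ++ substIter σ n v := by
  induction n generalizing u v with
  | zero => rfl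
  | succ n ih => rw [substIter_succ', ih, substW_append, ← substIter_succ', ← substIter_succ']

lemma substW_singleton (σ : A → List A) (c : A) : substW σ [c] = σ c := by
  simp [substW]

lemma substIter_flatMap (σ : A → List A) (n : ℕ) (v : List A) :
    substIter σ n v = v.flatMap (fun c => substIter σ n [c]) := by
  induction v with
  | nil => simp [substIter_nil]
  | cons c v ih =>
    rw [List.flatMap_cons, ← ih, show c :: v = [c] ++ v from rfl, substIter_append]

lemma length_le_substW (hσ : ∀ a, σ a ≠ []) (w : List A) :
    w.length ≤ (substW σ w).length := by
  induction w with
  | nil => simp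
  | cons c w ih =>
    have : substW σ (c :: w) = σ c ++ substW σ w := by
      rw [show c :: w = [c] ++ w from rfl, substW_append, substW_singleton]
    rw [this, List.length_append, List.length_cons]
    have h1 : 1 ≤ (σ c).length := List.length_pos_iff.mpr (hσ c)
    omega

lemma length_substIter_mono (hσ : ∀ a, σ a ≠ []) (w : List A) :
    Monotone fun n => (substIter σ n w).length := by
  apply monotone_nat_of_le_succ
  intro n
  rw [substIter_succ']
  exact length_le_substW hσ _

lemma length_le_substIter (hσ : ∀ a, σ a ≠ []) (n : ℕ) (w : List A) :
    w.length ≤ (substIter σ n w).length :=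
  length_substIter_mono hσ w (Nat.zero_le n)

lemma substIter_ne_nil (hσ : ∀ a, σ a ≠ []) (n : ℕ) {w : List A} (hw : w ≠ []) :
    substIter σ n w ≠ [] := by
  have := length_le_substIter hσ n w (σ := σ)
  have hl : 0 < w.length := List.length_pos_iff.mpr hw
  exact List.length_pos_iff.mp (by omega)

lemma mem_short_iff {a : A} : a ∈ shortLetters σ ↔ a ∉ longLetters σ := Iff.rfl

lemma long_of_mem_substW (hσ : ∀ a, σ a ≠ []) {e b : A} (he : e ∈ σ b)
    (hel : e ∈ longLetters σ) : b ∈ longLetters σ := by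
  obtain ⟨u, v, huv⟩ := List.append_of_mem he
  have key : ∀ n, (substIter σ n [e]).length ≤ (substIter σ (n+1) [b]).length := by
    intro n
    rw [substIter_succ, substW_singleton, huv, substIter_append,
      show e :: v = [e] ++ v from rfl, substIter_append]
    simp only [List.length_append]
    omega
  have h2 : Tendsto (fun n => (substIter σ (n+1) [b]).length) atTop atTop :=
    tendsto_atTop_mono key hel
  exact (Filter.tendsto_add_atTop_iff_nat 1).mp h2

lemma short_of_mem_substW (hσ : ∀ a, σ a ≠ []) {b e : A} (hb : b ∈ shortLetters σ)
    (he : e ∈ σ b) : e ∈ shortLetters σ := by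
  intro hel
  exact hb (long_of_mem_substW hσ he hel)

lemma Short.substW (hσ : ∀ a, σ a ≠ []) {w : List A} (h : Short σ w) :
    Short σ (substW σ w) := by
  intro e he
  rw [SubstMin.substW, List.mem_flatMap] at he
  obtain ⟨c, hc, he⟩ := he
  exact short_of_mem_substW hσ (h c hc) he

lemma Short.substIter (hσ : ∀ a, σ a ≠ []) {w : List A} (h : Short σ w) (n : ℕ) :
    Short σ (SubstMin.substIter σ n w) := by
  induction n with
  | zero => exact h
  | succ n ih => rw [substIter_succ']; exact ih.substW hσ

lemma exists_short_bound [Fintype A] (hσ : ∀ a, σ a ≠ []) :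
    ∃ K, 1 ≤ K ∧ ∀ s ∈ shortLetters σ, ∀ n, (substIter σ n [s]).length ≤ K := by
  have h : ∀ s : A, ∃ Ks, ∀ n, s ∈ shortLetters σ → (substIter σ n [s]).length ≤ Ks := by
    intro s
    by_cases hs : s ∈ shortLetters σ
    · by_contra hcon
      push_neg at hcon
      apply hs
      apply tendsto_atTop_atTop_of_monotone (length_substIter_mono hσ [s])
      intro b
      obtain ⟨n, -, hn⟩ := hcon b
      exact ⟨n, hn.le⟩
    · exact ⟨0, fun n h' => absurd h' hs⟩
  choose f hf using h
  refine ⟨max 1 (Finset.univ.sup f), le_max_left _ _, fun s hs n => ?_⟩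
  exact le_trans (hf s n hs) (le_max_of_le_right (Finset.le_sup (Finset.mem_univ s)))

lemma short_flatMap_length {g : A → List A} {K : ℕ} {v : List A}
    (h : ∀ e ∈ v, (g e).length ≤ K) : (v.flatMap g).length ≤ K * v.length := by
  induction v with
  | nil => simp
  | cons c v ih =>
    rw [List.flatMap_cons, List.length_append, List.length_cons]
    have := ih (fun e he => h e (List.mem_cons_of_mem _ he))
    have := h c (List.mem_cons_self)
    nlinarith

lemma short_substIter_length [Fintype A] (hσ : ∀ a, σ a ≠ []) {K : ℕ}
    (hK : ∀ s ∈ shortLetters σ, ∀ n, (substIter σ n [s]).length ≤ K)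
    {w : List A} (hw : Short σ w) (n : ℕ) :
    (substIter σ n w).length ≤ K * w.length := by
  rw [substIter_flatMap]
  exact short_flatMap_length (fun e he => hK e (hw e he) n)

lemma long_mem_substW [Fintype A] (hσ : ∀ a, σ a ≠ []) {b : A} (hb : b ∈ longLetters σ) :
    ∃ e ∈ σ b, e ∈ longLetters σ := by
  by_contra hcon
  push_neg at hcon
  obtain ⟨K, hK1, hK⟩ := exists_short_bound (σ := σ) hσ
  have hbound : ∀ n, (substIter σ (n+1) [b]).length ≤ K * (σ b).length := by
    intro n
    rw [substIter_succ, substW_singleton]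
    exact short_substIter_length hσ hK (fun e he => hcon e he) n
  obtain ⟨n, hn, hn2⟩ := ((hb.eventually_ge_atTop (K * (σ b).length + 1)).and
    (eventually_ge_atTop 1)).exists
  have := hbound (n - 1)
  rw [Nat.sub_add_cancel hn2] at this
  omega

/-! ### Decompositions at first/last long letter -/

lemma exists_last_long (σ : A → List A) (w : List A) (h : ∃ e ∈ w, e ∈ longLetters σ) :
    ∃ y ℓ t, w = y ++ ℓ :: t ∧ ℓ ∈ longLetters σ ∧ Short σ t := by
  induction w with
  | nil => simp at h
  | cons c w ih =>
    by_cases h' : ∃ e ∈ w, e ∈ longLetters σ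
    · obtain ⟨y, ℓ, t, hw, hl, ht⟩ := ih h'
      exact ⟨c :: y, ℓ, t, by rw [hw]; rfl, hl, ht⟩
    · push_neg at h'
      have hc : c ∈ longLetters σ := by
        obtain ⟨e, he, hel⟩ := h
        rcases List.mem_cons.mp he with rfl | he'
        · exact hel
        · exact absurd hel (h' e he')
      exact ⟨[], c, w, rfl, hc, fun e he => h' e he⟩

lemma exists_first_long (σ : A → List A) (w : List A) (h : ∃ e ∈ w, e ∈ longLetters σ) :
    ∃ u ℓ z, w = u ++ ℓ :: z ∧ Short σ u ∧ ℓ ∈ longLetters σ := by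
  induction w with
  | nil => simp at h
  | cons c w ih =>
    by_cases hc : c ∈ longLetters σ
    · exact ⟨[], c, w, rfl, fun e he => by simp at he, hc⟩
    · have h' : ∃ e ∈ w, e ∈ longLetters σ := by
        obtain ⟨e, he, hel⟩ := h
        rcases List.mem_cons.mp he with rfl | he'
        · exact absurd hel hc
        · exact ⟨e, he', hel⟩
      obtain ⟨u, ℓ, z, hw, hu, hl⟩ := ih h'
      refine ⟨c :: u, ℓ, z, by rw [hw]; rfl, ?_, hl⟩
      intro e he
      rcases List.mem_cons.mp he with rfl | he'
      · exact hc
      · exact hu e he'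

/-- Predicate for the last-long split of `σ b`. -/
def PR (σ : A → List A) (b : A) : Prop :=
  ∃ y ℓ t, σ b = y ++ ℓ :: t ∧ ℓ ∈ longLetters σ ∧ Short σ t

/-- Predicate for the first-long split of `σ b`. -/
def PL (σ : A → List A) (b : A) : Prop :=
  ∃ u ℓ z, σ b = u ++ ℓ :: z ∧ Short σ u ∧ ℓ ∈ longLetters σ

open Classical in
noncomputable def ymap (σ : A → List A) (b : A) : List A :=
  if h : PR σ b then h.choose else []
open Classical in
noncomputable def rmap (σ : A → List A) (b : A) : A :=
  if h : PR σ b then h.choose_spec.choose else b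
open Classical in
noncomputable def tmap (σ : A → List A) (b : A) : List A :=
  if h : PR σ b then h.choose_spec.choose_spec.choose else []

open Classical in
noncomputable def hmap (σ : A → List A) (b : A) : List A :=
  if h : PL σ b then h.choose else []
open Classical in
noncomputable def lmap (σ : A → List A) (b : A) : A :=
  if h : PL σ b then h.choose_spec.choose else b
open Classical in
noncomputable def zmap (σ : A → List A) (b : A) : List A :=
  if h : PL σ b then h.choose_spec.choose_spec.choose else []

lemma rmap_spec [Fintype A] (hσ : ∀ a, σ a ≠ []) {b : A} (hb : b ∈ longLetters σ) :
    σ b = ymap σ b ++ rmap σ b :: tmap σ b ∧ rmap σ b ∈ longLetters σ ∧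
      Short σ (tmap σ b) := by
  have h : PR σ b := by
    obtain ⟨e, he, hel⟩ := long_mem_substW hσ hb
    exact exists_last_long σ (σ b) ⟨e, he, hel⟩
  rw [ymap, rmap, tmap, dif_pos h, dif_pos h, dif_pos h]
  exact h.choose_spec.choose_spec.choose_spec

lemma lmap_spec [Fintype A] (hσ : ∀ a, σ a ≠ []) {b : A} (hb : b ∈ longLetters σ) :
    σ b = hmap σ b ++ lmap σ b :: zmap σ b ∧ Short σ (hmap σ b) ∧
      lmap σ b ∈ longLetters σ := by
  have h : PL σ b := by
    obtain ⟨e, he, hel⟩ := long_mem_substW hσ hb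
    exact exists_first_long σ (σ b) ⟨e, he, hel⟩
  rw [hmap, lmap, zmap, dif_pos h, dif_pos h, dif_pos h]
  exact h.choose_spec.choose_spec.choose_spec

noncomputable def suf (σ : A → List A) : ℕ → A → List A
  | 0, _ => []
  | (m+1), b => suf σ m (rmap σ b) ++ substIter σ m (tmap σ b)

noncomputable def pre (σ : A → List A) : ℕ → A → List A
  | 0, _ => []
  | (m+1), b => substIter σ m (hmap σ b) ++ pre σ m (lmap σ b)

lemma rIter_long [Fintype A] (hσ : ∀ a, σ a ≠ []) {b : A} (hb : b ∈ longLetters σ) :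
    ∀ m, (rmap σ)^[m] b ∈ longLetters σ := by
  intro m
  induction m with
  | zero => exact hb
  | succ m ih =>
    rw [Function.iterate_succ_apply']
    exact (rmap_spec hσ ih).2.1

lemma lIter_long [Fintype A] (hσ : ∀ a, σ a ≠ []) {b : A} (hb : b ∈ longLetters σ) :
    ∀ m, (lmap σ)^[m] b ∈ longLetters σ := by
  intro m
  induction m with
  | zero => exact hb
  | succ m ih =>
    rw [Function.iterate_succ_apply']
    exact (lmap_spec hσ ih).2.2

lemma suf_decomp [Fintype A] (hσ : ∀ a, σ a ≠ []) :
    ∀ (m : ℕ) {b : A}, b ∈ longLetters σ →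
      ∃ w, substIter σ m [b] = w ++ (rmap σ)^[m] b :: suf σ m b := by
  intro m
  induction m with
  | zero => exact fun hb => ⟨[], rfl⟩
  | succ m ih =>
    intro b hb
    obtain ⟨hdec, hrl, -⟩ := rmap_spec hσ hb
    obtain ⟨w', hw'⟩ := ih hrl
    refine ⟨substIter σ m (ymap σ b) ++ w', ?_⟩
    rw [substIter_succ, substW_singleton, hdec, substIter_append,
      show rmap σ b :: tmap σ b = [rmap σ b] ++ tmap σ b from rfl, substIter_append, hw',
      Function.iterate_succ_apply, suf]
    simp [List.append_assoc]

lemma pre_decomp [Fintype A] (hσ : ∀ a, σ a ≠ []) :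
    ∀ (m : ℕ) {b : A}, b ∈ longLetters σ →
      ∃ w, substIter σ m [b] = pre σ m b ++ (lmap σ)^[m] b :: w := by
  intro m
  induction m with
  | zero => exact fun hb => ⟨[], rfl⟩
  | succ m ih =>
    intro b hb
    obtain ⟨hdec, -, hll⟩ := lmap_spec hσ hb
    obtain ⟨w', hw'⟩ := ih hll
    refine ⟨w' ++ substIter σ m (zmap σ b), ?_⟩
    rw [substIter_succ, substW_singleton, hdec, substIter_append,
      show lmap σ b :: zmap σ b = [lmap σ b] ++ zmap σ b from rfl, substIter_append, hw',
      Function.iterate_succ_apply, pre]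
    simp [List.append_assoc]

lemma suf_short [Fintype A] (hσ : ∀ a, σ a ≠ []) :
    ∀ (m : ℕ) {b : A}, b ∈ longLetters σ → Short σ (suf σ m b) := by
  intro m
  induction m with
  | zero => intro b _ e he; simp [suf] at he
  | succ m ih =>
    intro b hb e he
    obtain ⟨-, hrl, hts⟩ := rmap_spec hσ hb
    rw [suf] at he
    rcases List.mem_append.mp he with h1 | h2
    · exact ih hrl e h1
    · exact (hts.substIter hσ m) e h2

lemma pre_short [Fintype A] (hσ : ∀ a, σ a ≠ []) :
    ∀ (m : ℕ) {b : A}, b ∈ longLetters σ → Short σ (pre σ m b) := by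
  intro m
  induction m with
  | zero => intro b _ e he; simp [pre] at he
  | succ m ih =>
    intro b hb e he
    obtain ⟨-, hhs, hll⟩ := lmap_spec hσ hb
    rw [pre] at he
    rcases List.mem_append.mp he with h1 | h2
    · exact (hhs.substIter hσ m) e h1
    · exact ih hll e h2


/-! ### Tameness: the short tails along cycles vanish -/

lemma tmap_eq_nil_of_periodic [Fintype A] (hσ : ∀ a, σ a ≠ []) (htame : Tame σ)
    {e : A} (he : e ∈ longLetters σ) {per : ℕ} (hper : 1 ≤ per)
    (hp : (rmap σ)^[per] e = e) : tmap σ e = [] := by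
  by_contra ht
  apply (htame e he).2
  obtain ⟨w, hw⟩ := suf_decomp hσ per he
  rw [hp] at hw
  refine ⟨per, hper, suf σ per e, w, ?_, fun b hb => suf_short hσ per he b hb, hw⟩
  obtain ⟨p', rfl⟩ := Nat.exists_eq_add_of_le hper
  rw [Nat.add_comm, suf]
  intro hnil
  exact substIter_ne_nil hσ p' ht (List.append_eq_nil_iff.mp hnil).2

lemma hmap_eq_nil_of_periodic [Fintype A] (hσ : ∀ a, σ a ≠ []) (htame : Tame σ)
    {e : A} (he : e ∈ longLetters σ) {per : ℕ} (hper : 1 ≤ per)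
    (hp : (lmap σ)^[per] e = e) : hmap σ e = [] := by
  by_contra ht
  apply (htame e he).1
  obtain ⟨w, hw⟩ := pre_decomp hσ per he
  rw [hp] at hw
  refine ⟨per, hper, pre σ per e, w, ?_, fun b hb => pre_short hσ per he b hb, hw⟩
  obtain ⟨p', rfl⟩ := Nat.exists_eq_add_of_le hper
  rw [Nat.add_comm, pre]
  intro hnil
  exact substIter_ne_nil hσ p' ht (List.append_eq_nil_iff.mp hnil).1

lemma iter_eventually_periodic {f : A → A} {b : A} {i i' : ℕ} (hii : i < i')
    (heq : f^[i] b = f^[i'] b) : ∀ k, i ≤ k → f^[k + (i' - i)] b = f^[k] b := by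
  intro k hk
  induction k, hk using Nat.le_induction with
  | base =>
    rw [show i + (i' - i) = i' from by omega, heq]
  | succ k hk ih =>
    rw [show k + 1 + (i' - i) = (k + (i' - i)) + 1 from by omega,
      Function.iterate_succ_apply', ih]
    exact (Function.iterate_succ_apply' f k b).symm

lemma tmap_rIter_eq_nil [Fintype A] (hσ : ∀ a, σ a ≠ []) (htame : Tame σ)
    {b : A} (hb : b ∈ longLetters σ) {j : ℕ} (hj : Fintype.card A ≤ j) :
    tmap σ ((rmap σ)^[j] b) = [] := by
  set N := Fintype.card A
  have hinj := Fintype.exists_ne_map_eq_of_card_lt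
    (fun i : Fin (N + 1) => (rmap σ)^[(i : ℕ)] b) (by simp [N])
  obtain ⟨i, i', hne, heq0⟩ := hinj
  have heq : (rmap σ)^[(i:ℕ)] b = (rmap σ)^[(i':ℕ)] b := heq0
  have hper : 1 ≤ (max (i:ℕ) (i':ℕ)) - (min (i:ℕ) (i':ℕ)) := by
    have : (i:ℕ) ≠ (i':ℕ) := fun h => hne (Fin.ext h)
    omega
  have hkey := iter_eventually_periodic (f := rmap σ) (b := b)
    (i := min (i:ℕ) (i':ℕ)) (i' := max (i:ℕ) (i':ℕ)) (by
      have : (i:ℕ) ≠ (i':ℕ) := fun h => hne (Fin.ext h); omega) (by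
      rcases le_total (i:ℕ) (i':ℕ) with h | h
      · rw [min_eq_left h, max_eq_right h]; exact heq
      · rw [min_eq_right h, max_eq_left h]; exact heq.symm)
  have hjge : min (i:ℕ) (i':ℕ) ≤ j := le_trans (by have := i.is_le; have := i'.is_le; omega) hj
  have hpj : (rmap σ)^[(max (i:ℕ) (i':ℕ)) - (min (i:ℕ) (i':ℕ))] ((rmap σ)^[j] b)
      = (rmap σ)^[j] b := by
    rw [← Function.iterate_add_apply, Nat.add_comm]
    exact hkey j hjge
  exact tmap_eq_nil_of_periodic hσ htame (rIter_long hσ hb j) hper hpj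

lemma hmap_lIter_eq_nil [Fintype A] (hσ : ∀ a, σ a ≠ []) (htame : Tame σ)
    {b : A} (hb : b ∈ longLetters σ) {j : ℕ} (hj : Fintype.card A ≤ j) :
    hmap σ ((lmap σ)^[j] b) = [] := by
  set N := Fintype.card A
  have hinj := Fintype.exists_ne_map_eq_of_card_lt
    (fun i : Fin (N + 1) => (lmap σ)^[(i : ℕ)] b) (by simp [N])
  obtain ⟨i, i', hne, heq0⟩ := hinj
  have heq : (lmap σ)^[(i:ℕ)] b = (lmap σ)^[(i':ℕ)] b := heq0
  have hper : 1 ≤ (max (i:ℕ) (i':ℕ)) - (min (i:ℕ) (i':ℕ)) := by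
    have : (i:ℕ) ≠ (i':ℕ) := fun h => hne (Fin.ext h)
    omega
  have hkey := iter_eventually_periodic (f := lmap σ) (b := b)
    (i := min (i:ℕ) (i':ℕ)) (i' := max (i:ℕ) (i':ℕ)) (by
      have : (i:ℕ) ≠ (i':ℕ) := fun h => hne (Fin.ext h); omega) (by
      rcases le_total (i:ℕ) (i':ℕ) with h | h
      · rw [min_eq_left h, max_eq_right h]; exact heq
      · rw [min_eq_right h, max_eq_left h]; exact heq.symm)
  have hjge : min (i:ℕ) (i':ℕ) ≤ j := le_trans (by have := i.is_le; have := i'.is_le; omega) hj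
  have hpj : (lmap σ)^[(max (i:ℕ) (i':ℕ)) - (min (i:ℕ) (i':ℕ))] ((lmap σ)^[j] b)
      = (lmap σ)^[j] b := by
    rw [← Function.iterate_add_apply, Nat.add_comm]
    exact hkey j hjge
  exact hmap_eq_nil_of_periodic hσ htame (lIter_long hσ hb j) hper hpj

/-! ### Length bounds on `suf` and `pre` -/

lemma suf_bound [Fintype A] (hσ : ∀ a, σ a ≠ []) {K C : ℕ}
    (hK : ∀ s ∈ shortLetters σ, ∀ n, (substIter σ n [s]).length ≤ K)
    (hC : ∀ e : A, (σ e).length ≤ C) :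
    ∀ (m J : ℕ) {b : A}, b ∈ longLetters σ →
      (∀ i, J ≤ i → tmap σ ((rmap σ)^[i] b) = []) →
      (suf σ m b).length ≤ C * K * J := by
  intro m
  induction m with
  | zero => intro J b _ _; simp [suf]
  | succ m ih =>
    intro J b hb hvan
    obtain ⟨hdec, hrl, hts⟩ := rmap_spec hσ hb
    rw [suf, List.length_append]
    rcases Nat.eq_zero_or_pos J with rfl | hJ
    · have ht0 : tmap σ b = [] := hvan 0 le_rfl
      have h1 : (suf σ m (rmap σ b)).length ≤ C * K * 0 := by
        apply ih 0 hrl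
        intro i _
        have := hvan (i + 1) (Nat.zero_le _)
        rwa [Function.iterate_succ_apply] at this
      rw [ht0, substIter_nil]
      simpa using h1
    · obtain ⟨J', rfl⟩ := Nat.exists_eq_add_of_le hJ
      rw [Nat.add_comm 1 J'] at *
      have h1 : (suf σ m (rmap σ b)).length ≤ C * K * J' := by
        apply ih J' hrl
        intro i hi
        have := hvan (i + 1) (by omega)
        rwa [Function.iterate_succ_apply] at this
      have h2 : (substIter σ m (tmap σ b)).length ≤ K * C := by
        calc (substIter σ m (tmap σ b)).length ≤ K * (tmap σ b).length :=
              short_substIter_length hσ hK hts m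
          _ ≤ K * C := by
              have : (tmap σ b).length ≤ C := by
                have := hC b
                rw [hdec] at this
                simp only [List.length_append, List.length_cons] at this
                omega
              exact Nat.mul_le_mul_left K this
      calc (suf σ m (rmap σ b)).length + (substIter σ m (tmap σ b)).length
          ≤ C * K * J' + K * C := by omega
        _ = C * K * (J' + 1) := by ring

lemma pre_bound [Fintype A] (hσ : ∀ a, σ a ≠ []) {K C : ℕ}
    (hK : ∀ s ∈ shortLetters σ, ∀ n, (substIter σ n [s]).length ≤ K)
    (hC : ∀ e : A, (σ e).length ≤ C) :
    ∀ (m J : ℕ) {b : A}, b ∈ longLetters σ →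
      (∀ i, J ≤ i → hmap σ ((lmap σ)^[i] b) = []) →
      (pre σ m b).length ≤ C * K * J := by
  intro m
  induction m with
  | zero => intro J b _ _; simp [pre]
  | succ m ih =>
    intro J b hb hvan
    obtain ⟨hdec, hhs, hll⟩ := lmap_spec hσ hb
    rw [pre, List.length_append]
    rcases Nat.eq_zero_or_pos J with rfl | hJ
    · have ht0 : hmap σ b = [] := hvan 0 le_rfl
      have h1 : (pre σ m (lmap σ b)).length ≤ C * K * 0 := by
        apply ih 0 hll
        intro i _
        have := hvan (i + 1) (Nat.zero_le _)
        rwa [Function.iterate_succ_apply] at this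
      rw [ht0, substIter_nil]
      simpa using h1
    · obtain ⟨J', rfl⟩ := Nat.exists_eq_add_of_le hJ
      rw [Nat.add_comm 1 J'] at *
      have h1 : (pre σ m (lmap σ b)).length ≤ C * K * J' := by
        apply ih J' hll
        intro i hi
        have := hvan (i + 1) (by omega)
        rwa [Function.iterate_succ_apply] at this
      have h2 : (substIter σ m (hmap σ b)).length ≤ K * C := by
        calc (substIter σ m (hmap σ b)).length ≤ K * (hmap σ b).length :=
              short_substIter_length hσ hK hhs m
          _ ≤ K * C := by
              have : (hmap σ b).length ≤ C := by
                have := hC b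
                rw [hdec] at this
                simp only [List.length_append, List.length_cons] at this
                omega
              exact Nat.mul_le_mul_left K this
      calc (substIter σ m (hmap σ b)).length + (pre σ m (lmap σ b)).length
          ≤ C * K * J' + K * C := by omega
        _ = C * K * (J' + 1) := by ring


/-! ### Factor decomposition in concatenations -/

lemma prefix_flatMap {g : A → List A} :
    ∀ (v P : List A), P <+: v.flatMap g → P ≠ [] →
      ∃ v₂ c₂ v₃ pfx, v = v₂ ++ c₂ :: v₃ ∧ pfx <+: g c₂ ∧ pfx ≠ [] ∧
        P = v₂.flatMap g ++ pfx := by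
  intro v
  induction v with
  | nil =>
    intro P hP hne
    simp only [List.flatMap_nil, List.prefix_nil] at hP
    exact absurd hP hne
  | cons c v' ih =>
    intro P hP hne
    rw [List.flatMap_cons] at hP
    by_cases hlen : P.length ≤ (g c).length
    · refine ⟨[], c, v', P, rfl, ?_, hne, by simp⟩
      exact List.prefix_of_prefix_length_le hP (List.prefix_append _ _) hlen
    · have hgc : g c <+: P :=
        List.prefix_of_prefix_length_le (List.prefix_append _ _) hP (by omega)
      obtain ⟨P', rfl⟩ := hgc
      have hP' : P' <+: v'.flatMap g := by
        obtain ⟨t, ht⟩ := hP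
        rw [List.append_assoc] at ht
        exact ⟨t, List.append_cancel_left ht⟩
      have hne' : P' ≠ [] := by
        intro h
        rw [h] at hlen
        simp at hlen
      obtain ⟨v₂, c₂, v₃, pfx, hv, hpfx, hpne, hPeq⟩ := ih P' hP' hne'
      exact ⟨c :: v₂, c₂, v₃, pfx, by rw [hv, List.cons_append], hpfx, hpne,
        by rw [List.flatMap_cons, hPeq, List.append_assoc]⟩

lemma suffix_flatMap {g : A → List A} (v S : List A) (hS : S <:+ v.flatMap g)
    (hne : S ≠ []) :
    ∃ v₁ c₁ v₄ sfx, v = v₁ ++ c₁ :: v₄ ∧ sfx <:+ g c₁ ∧ sfx ≠ [] ∧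
      S = sfx ++ v₄.flatMap g := by
  have hrev : S.reverse <+: (v.reverse.flatMap (List.reverse ∘ g)) := by
    rw [← List.reverse_flatMap]
    exact List.reverse_prefix.mpr hS
  obtain ⟨v₂, c₂, v₃, pfx, hv, hpfx, hpne, hPeq⟩ :=
    prefix_flatMap v.reverse S.reverse hrev (by simpa using hne)
  refine ⟨v₃.reverse, c₂, v₂.reverse, pfx.reverse, ?_, ?_, by simpa using hpne, ?_⟩
  · have := congrArg List.reverse hv
    simpa [List.reverse_append] using this
  · have : pfx.reverse.reverse <+: (g c₂).reverse := by simpa using hpfx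
    exact List.reverse_prefix.mp this
  · have := congrArg List.reverse hPeq
    rw [List.reverse_reverse, List.reverse_append] at this
    rw [this]
    congr 1
    rw [show v₂.flatMap (List.reverse ∘ g) = (v₂.reverse.flatMap g).reverse from by
      rw [List.reverse_flatMap, List.reverse_reverse], List.reverse_reverse]

lemma infix_flatMap {g : A → List A} (v B : List A) (hB : B <:+: v.flatMap g)
    (hne : B ≠ []) :
    (∃ c ∈ v, B <:+: g c) ∨
      ∃ v₁ c₁ v₂ c₂ v₃ sfx pfx, v = v₁ ++ c₁ :: (v₂ ++ c₂ :: v₃) ∧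
        sfx <:+ g c₁ ∧ pfx <+: g c₂ ∧ B = sfx ++ v₂.flatMap g ++ pfx := by
  obtain ⟨pr, post, h⟩ := hB
  have hS : B ++ post <:+ v.flatMap g := ⟨pr, by rw [← h, List.append_assoc]⟩
  obtain ⟨v₁, c₁, v₄, sfx, hv, hsfx, hsne, hSeq⟩ :=
    suffix_flatMap v (B ++ post) hS (by simp [hne])
  by_cases hlen : B.length ≤ sfx.length
  · left
    refine ⟨c₁, by rw [hv]; exact List.mem_append_right _ (List.mem_cons_self), ?_⟩
    have h1 : B <+: B ++ post := List.prefix_append _ _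
    have h2 : sfx <+: B ++ post := by rw [hSeq]; exact List.prefix_append _ _
    have hBp : B <+: sfx := List.prefix_of_prefix_length_le h1 h2 hlen
    exact hBp.isInfix.trans hsfx.isInfix
  · have h1 : B <+: B ++ post := List.prefix_append _ _
    have h2 : sfx <+: B ++ post := by rw [hSeq]; exact List.prefix_append _ _
    have hsp : sfx <+: B := List.prefix_of_prefix_length_le h2 h1 (by omega)
    obtain ⟨B', rfl⟩ := hsp
    have hB' : B' <+: v₄.flatMap g := by
      rw [List.append_assoc] at hSeq
      exact ⟨post, List.append_cancel_left hSeq⟩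
    have hne' : B' ≠ [] := by
      intro hh
      rw [hh] at hlen
      simp at hlen
    obtain ⟨v₂, c₂, v₃, pfx, hv₄, hpfx, hpne, hPeq⟩ := prefix_flatMap v₄ B' hB' hne'
    right
    exact ⟨v₁, c₁, v₂, c₂, v₃, sfx, pfx, by rw [hv, hv₄], hsfx, hpfx,
      by rw [hPeq, List.append_assoc]⟩

/-! ### Short suffix/prefix length bounds from a decomposition with a long letter -/

lemma short_suffix_le {W w s sfx : List A} {ℓ : A} (hdec : W = w ++ ℓ :: s)
    (hl : ℓ ∈ longLetters σ) (hsfx : sfx <:+ W) (hshort : Short σ sfx) :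
    sfx.length ≤ s.length := by
  by_contra hcon
  push_neg at hcon
  obtain ⟨pr, hpr⟩ := hsfx
  rw [hdec, show w ++ ℓ :: s = (w ++ [ℓ]) ++ s from by simp] at hpr
  set k := sfx.length - s.length with hk
  have hsplit : sfx = sfx.take k ++ sfx.drop k := (List.take_append_drop k sfx).symm
  rw [hsplit, ← List.append_assoc] at hpr
  have hlen2 : (sfx.drop k).length = s.length := by
    rw [List.length_drop]
    omega
  obtain ⟨h1, h2⟩ := List.append_inj' hpr hlen2
  have htne : sfx.take k ≠ [] := by
    intro hh
    have := congrArg List.length hh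
    rw [List.length_take] at this
    simp only [List.length_nil] at this
    omega
  rcases List.eq_nil_or_concat (sfx.take k) with hnil | ⟨L, bb, hL⟩
  · exact htne hnil
  · rw [List.concat_eq_append] at hL
    rw [hL, ← List.append_assoc] at h1
    obtain ⟨-, h4⟩ := List.append_inj' h1 (by simp)
    have hbb : bb = ℓ := by simpa using h4
    have : ℓ ∈ sfx := by
      rw [hsplit, hL, hbb]
      exact List.mem_append_left _ (List.mem_append_right _ (List.mem_singleton_self _))
    exact (hshort ℓ this) hl

lemma short_prefix_le {W p z pfx : List A} {ℓ : A} (hdec : W = p ++ ℓ :: z)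
    (hl : ℓ ∈ longLetters σ) (hpfx : pfx <+: W) (hshort : Short σ pfx) :
    pfx.length ≤ p.length := by
  by_contra hcon
  push_neg at hcon
  obtain ⟨post, hpost⟩ := hpfx
  rw [hdec, show p ++ ℓ :: z = (p ++ [ℓ]) ++ z from by simp] at hpost
  set k := p.length + 1 with hk
  have hsplit : pfx = pfx.take k ++ pfx.drop k := (List.take_append_drop k pfx).symm
  rw [hsplit, List.append_assoc] at hpost
  obtain ⟨h1, -⟩ := List.append_inj hpost (by
    rw [List.length_take]
    simp only [List.length_append, List.length_cons, List.length_nil]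
    omega)
  have : ℓ ∈ pfx := by
    rw [hsplit, h1]
    exact List.mem_append_left _ (List.mem_append_right _ (List.mem_singleton_self _))
  exact (hshort ℓ this) hl


/-! ### All-short factors of `σᵐ(c)` have bounded length -/

lemma allShort_factor_bound [Fintype A] (hσ : ∀ a, σ a ≠ []) (htame : Tame σ)
    {K C : ℕ} (hK1 : 1 ≤ K)
    (hK : ∀ s ∈ shortLetters σ, ∀ n, (substIter σ n [s]).length ≤ K)
    (hC : ∀ e : A, (σ e).length ≤ C) :
    ∀ (m : ℕ) (c : A) (B : List A), Short σ B → B <:+: substIter σ m [c] →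
      B.length ≤ 2 * (C * K * Fintype.card A) + K * C + 2 * K := by
  set N := Fintype.card A with hN
  set G := 2 * (C * K * N) + K * C + 2 * K with hG
  intro m
  induction m with
  | zero =>
    intro c B _ hBin
    have := hBin.length_le
    simp only [substIter_zero, List.length_cons, List.length_nil] at this
    omega
  | succ m ih =>
    intro c B hBs hBin
    by_cases hc : c ∈ longLetters σ
    · by_cases hBe : B = []
      · simp [hBe]
      · rw [substIter_succ, substW_singleton, substIter_flatMap] at hBin
        rcases infix_flatMap _ _ hBin hBe with ⟨e, _, hBe'⟩ |
          ⟨v₁, c₁, v₂, c₂, v₃, sfx, pfx, hv, hsfx, hpfx, hBeq⟩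
        · exact ih e B hBs hBe'
        · have hsfxB : ∀ x ∈ sfx, x ∈ B := by
            intro x hx
            rw [hBeq]
            exact List.mem_append_left _ (List.mem_append_left _ hx)
          have hpfxB : ∀ x ∈ pfx, x ∈ B := by
            intro x hx
            rw [hBeq]
            exact List.mem_append_right _ hx
          have hmidB : ∀ x ∈ v₂.flatMap (fun e => substIter σ m [e]), x ∈ B := by
            intro x hx
            rw [hBeq]
            exact List.mem_append_left _ (List.mem_append_right _ hx)
          have hQsfx : sfx.length ≤ C * K * N + K := by
            by_cases hc₁ : c₁ ∈ longLetters σ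
            · obtain ⟨w, hw⟩ := suf_decomp hσ m hc₁
              have h1 : sfx.length ≤ (suf σ m c₁).length :=
                short_suffix_le hw (rIter_long hσ hc₁ m) hsfx
                  (fun x hx => hBs x (hsfxB x hx))
              have h2 : (suf σ m c₁).length ≤ C * K * N :=
                suf_bound hσ hK hC m N hc₁
                  (fun i hi => tmap_rIter_eq_nil hσ htame hc₁ hi)
              omega
            · have h1 := hsfx.length_le
              have h2 := hK c₁ hc₁ m
              omega
          have hQpfx : pfx.length ≤ C * K * N + K := by
            by_cases hc₂ : c₂ ∈ longLetters σ
            · obtain ⟨w, hw⟩ := pre_decomp hσ m hc₂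
              have h1 : pfx.length ≤ (pre σ m c₂).length :=
                short_prefix_le hw (lIter_long hσ hc₂ m) hpfx
                  (fun x hx => hBs x (hpfxB x hx))
              have h2 : (pre σ m c₂).length ≤ C * K * N :=
                pre_bound hσ hK hC m N hc₂
                  (fun i hi => hmap_lIter_eq_nil hσ htame hc₂ hi)
              omega
            · have h1 := hpfx.length_le
              have h2 := hK c₂ hc₂ m
              omega
          have hv₂short : ∀ e ∈ v₂, e ∈ shortLetters σ := by
            intro e he
            by_contra hel
            have helong : e ∈ longLetters σ := by
              rwa [mem_short_iff, not_not] at hel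
            obtain ⟨w, hw⟩ := suf_decomp hσ m helong
            have hmem : (rmap σ)^[m] e ∈ substIter σ m [e] := by
              rw [hw]
              exact List.mem_append_right _ (List.mem_cons_self)
            have : (rmap σ)^[m] e ∈ B :=
              hmidB _ (List.mem_flatMap.mpr ⟨e, he, hmem⟩)
            exact (hBs _ this) (rIter_long hσ helong m)
          have hmid : (v₂.flatMap (fun e => substIter σ m [e])).length ≤ K * C := by
            have h1 : (v₂.flatMap (fun e => substIter σ m [e])).length ≤ K * v₂.length :=
              short_flatMap_length (fun e he => hK e (hv₂short e he) m)
            have h2 : v₂.length ≤ C := by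
              have := hC c
              have := congrArg List.length hv
              simp only [List.length_append, List.length_cons] at this
              omega
            calc _ ≤ K * v₂.length := h1
              _ ≤ K * C := Nat.mul_le_mul_left K h2
          have := congrArg List.length hBeq
          simp only [List.length_append] at this
          omega
    · have h1 := hBin.length_le
      have h2 := hK c hc (m + 1)
      omega

/-! ### Main claim: `a` occurs in every sufficiently long word of the language -/

lemma occurs_in_long_factors [Fintype A] (hσ : ∀ a, σ a ≠ []) (htame : Tame σ)
    (hprim : ∃ n : ℕ, 1 ≤ n ∧ ∀ a ∈ longLetters σ, ∀ b ∈ longLetters σ,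
      a ∈ substIter σ n [b])
    {a : A} (ha : a ∈ longLetters σ) :
    ∃ D : ℕ, 1 ≤ D ∧ ∀ (w : List A) (c : A) (n : ℕ), 1 ≤ n →
      w <:+: substIter σ n [c] → D ≤ w.length → a ∈ w := by
  obtain ⟨K, hK1, hK⟩ := exists_short_bound (σ := σ) hσ
  set C := max 1 (Finset.univ.sup fun e => (σ e).length) with hCdef
  have hC : ∀ e : A, (σ e).length ≤ C := fun e =>
    le_max_of_le_right (Finset.le_sup (f := fun e => (σ e).length) (Finset.mem_univ e))
  obtain ⟨n₀, hn₀1, hn₀⟩ := hprim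
  set M := max 1 (Finset.univ.sup fun e => (substIter σ n₀ [e]).length) with hMdef
  have hM : ∀ e : A, (substIter σ n₀ [e]).length ≤ M := fun e =>
    le_max_of_le_right (Finset.le_sup (f := fun e => (substIter σ n₀ [e]).length)
      (Finset.mem_univ e))
  have hM1 : 1 ≤ M := le_max_left _ _
  set N := Fintype.card A with hN
  set G := 2 * (C * K * N) + K * C + 2 * K with hG
  refine ⟨max K (M * (G + 3)) + 1, by omega, ?_⟩
  intro w c n hn1 hinf hlen
  by_cases hc : c ∈ longLetters σ
  · by_cases hn : n ≤ n₀
    · exfalso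
      have h1 := hinf.length_le
      have h2 := length_substIter_mono hσ [c] hn
      have h3 := hM c
      simp only at h2
      have : M * (G + 3) ≥ M * 1 := Nat.mul_le_mul_left M (by omega)
      omega
    · push_neg at hn
      rw [show n = n₀ + (n - n₀) from by omega, substIter_add,
        substIter_flatMap] at hinf
      have hne : w ≠ [] := by
        intro h
        rw [h] at hlen
        simp at hlen
      rcases infix_flatMap _ _ hinf hne with ⟨e, _, hwe⟩ |
        ⟨v₁, c₁, v₂, c₂, v₃, sfx, pfx, hv, hsfx, hpfx, hweq⟩
      · exfalso
        have h1 := hwe.length_le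
        have h2 := hM e
        have : M * (G + 3) ≥ M * 1 := Nat.mul_le_mul_left M (by omega)
        omega
      · have hv₂big : G < v₂.length := by
          have h1 := hsfx.length_le
          have h2 := (hpfx.isInfix).length_le
          have hmid : (v₂.flatMap (fun e => substIter σ n₀ [e])).length ≤ M * v₂.length :=
            short_flatMap_length (fun e _ => hM e)
          have htot := congrArg List.length hweq
          simp only [List.length_append] at htot
          have hc₁ := hM c₁
          have hc₂ := hM c₂
          have hDw : M * (G + 3) + 1 ≤ M * v₂.length + 2 * M := by
            calc M * (G + 3) + 1 ≤ max K (M * (G + 3)) + 1 := by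
                  exact Nat.add_le_add_right (le_max_right _ _) 1
              _ ≤ w.length := hlen
              _ ≤ M * v₂.length + 2 * M := by omega
          have h20 : M * (G + 1) < M * v₂.length := by nlinarith
          have h21 := Nat.lt_of_mul_lt_mul_left h20
          omega
        have hnotshort : ¬ Short σ v₂ := by
          intro hs
          have hv₂inf : v₂ <:+: substIter σ (n - n₀) [c] :=
            ⟨v₁ ++ [c₁], c₂ :: v₃, by rw [hv]; simp⟩
          have := allShort_factor_bound hσ htame hK1 hK hC (n - n₀) c v₂ hs hv₂inf
          rw [← hN, ← hG] at this
          omega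
        have : ∃ e ∈ v₂, e ∈ longLetters σ := by
          by_contra hcon
          push_neg at hcon
          exact hnotshort (fun e he => by
            rw [mem_short_iff]
            intro hel
            exact absurd hel (hcon e he))
        obtain ⟨e, he, helong⟩ := this
        have hae : a ∈ substIter σ n₀ [e] := hn₀ a ha e helong
        rw [hweq]
        exact List.mem_append_left _ (List.mem_append_right _
          (List.mem_flatMap.mpr ⟨e, he, hae⟩))
  · exfalso
    have h1 := hinf.length_le
    have h2 := hK c hc n
    omega


end S12

/-- For a tame `l`-primitive substitution and a periodic point
`x₀ ∈ X_σ` of the induced map `σ : X_σ → X_σ` (with `σᵖ(x₀) = x₀`, `p ≥ 1`), every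
letter `a ∈ A_l` occurs in `x₀` with bounded gaps. -/
theorem statement12 {A : Type*} [Fintype A] (σ : A → List A)
    (hσ : SubstMin.IsSubstitution σ) (htame : SubstMin.Tame σ)
    (hprim : SubstMin.LPrimitive σ)
    (x₀ : ℤ → A) (hx₀ : x₀ ∈ SubstMin.XSub σ) (p : ℕ) (hp : 1 ≤ p)
    (ys : ℕ → (ℤ → A)) (hys0 : ys 0 = x₀) (hysp : ys p = x₀)
    (hstep : ∀ k < p, SubstMin.IsSubstImage σ (ys k) (ys (k + 1))) :
    ∀ a ∈ SubstMin.longLetters σ, ∃ d : ℕ, 1 ≤ d ∧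
      ∀ m : ℤ, ∃ j : ℤ, m ≤ j ∧ j < m + (d : ℤ) ∧ x₀ j = a := by
  intro a ha
  obtain ⟨hσne, -⟩ := hσ
  obtain ⟨D, hD1, hD⟩ := S12.occurs_in_long_factors hσne htame hprim ha
  refine ⟨D, hD1, fun m => ?_⟩
  have hD1' : (1 : ℤ) ≤ (D : ℤ) := by exact_mod_cast hD1
  have hmle : m ≤ m + (D : ℤ) - 1 := by omega
  obtain ⟨c, n, hn1, hinf⟩ := hx₀ m (m + D - 1) hmle
  have hcast : m + (D : ℤ) - 1 - m + 1 = (D : ℤ) := by ring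
  have hlen : (SubstMin.factorOf x₀ m (m + D - 1)).length = D := by
    simp [SubstMin.factorOf, hcast, Function.comp_def]
  have haw : a ∈ SubstMin.factorOf x₀ m (m + D - 1) :=
    hD _ c n hn1 hinf (by rw [hlen])
  simp only [SubstMin.factorOf, List.mem_map] at haw
  obtain ⟨i, hi, hxi⟩ := haw
  simp at hi
  obtain ⟨i', hi', rfl⟩ := hi
  exact ⟨m + i', by omega, by omega, hxi⟩
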